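/- Let λ > 1 be a real number. Suppose f : ℝⁿ × ℝᵐ → ℝⁿ is Borel measurable, X and T ⊆ X are bounded open sets, X̂ is a Borel set with X̂ ⊇ {f(x₀,u) : x₀ ∈ X, u ∈ U} ∪ X, and P is a Borel probability measure on ℝᵐ with P(U) = 1. If there exists a bounded Borel measurable function v : X̂ → ℝ satisfying: (i) ∫ v(f(x,u)) dP(u) ≥ λ·v(x) for every x ∈ X\T; (ii) v(x) ≤ 0 for every x ∈ X̂\X; and (iii) v(x) ≤ 1 for every x ∈ T, then for every x₀ ∈ X with v(x₀) > 0 one has P^∞({π : ∃ k ∈ ℕ, φ^π_{x₀}(k) ∈ T and φ^π_{x₀}(l) ∈ X for all 0 ≤ l ≤ k}) > 0; that is, {x ∈ X : v(x) > 0} is a 0-reach-avoid set. -/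

import Mathlib

open MeasureTheory Set

noncomputable section

/-- Trajectory of the discrete-time control system `x(t+1) = f(x(t), u(t))`. -/
def traj {n m : ℕ} (f : (Fin n → ℝ) → (Fin m → ℝ) → (Fin n → ℝ))
    (x0 : Fin n → ℝ) (π : ℕ → (Fin m → ℝ)) : ℕ → (Fin n → ℝ)
  | 0 => x0
  | t + 1 => f (traj f x0 π t) (π t)

/-- Extension of a finite tuple of controls to an infinite sequence (by `0`). -/
def ext0 {m : ℕ} (k : ℕ) (u : Fin k → (Fin m → ℝ)) : ℕ → (Fin m → ℝ) :=
  fun i => if h : i < k then u ⟨i, h⟩ else 0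

/-- Restriction of an infinite control sequence to its first `k` values. -/
def res0 {m : ℕ} (k : ℕ) (π : ℕ → (Fin m → ℝ)) : Fin k → (Fin m → ℝ) :=
  fun i => π i.val

theorem measurable_ext0 {m k : ℕ} : Measurable (ext0 (m := m) k) := by
  apply measurable_pi_lambda
  intro i
  unfold ext0
  by_cases h : i < k
  · simp only [dif_pos h]; exact measurable_pi_apply _
  · simp only [dif_neg h]; exact measurable_const

theorem measurable_res0 {m k : ℕ} : Measurable (res0 (m := m) k) :=
  measurable_pi_lambda _ fun _ => measurable_pi_apply _

theorem measurable_traj {n m : ℕ} {f : (Fin n → ℝ) → (Fin m → ℝ) → (Fin n → ℝ)}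
    (hf : Measurable fun p : (Fin n → ℝ) × (Fin m → ℝ) => f p.1 p.2) (x0 : Fin n → ℝ) :
    ∀ t, Measurable fun π : ℕ → (Fin m → ℝ) => traj f x0 π t
  | 0 => measurable_const
  | t + 1 => by
      have h1 := measurable_traj hf x0 t
      simp only [traj]
      exact hf.comp (h1.prodMk (measurable_pi_apply t))

theorem traj_congr {n m : ℕ} (f : (Fin n → ℝ) → (Fin m → ℝ) → (Fin n → ℝ))
    (x0 : Fin n → ℝ) (π π' : ℕ → (Fin m → ℝ)) :
    ∀ t, (∀ i < t, π i = π' i) → traj f x0 π t = traj f x0 π' t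
  | 0, _ => rfl
  | t + 1, h => by
      have h1 := traj_congr f x0 π π' t fun i hi => h i (Nat.lt_succ_of_lt hi)
      simp only [traj, h1, h t (Nat.lt_succ_self t)]

/-- Lemma 1: the expectation-based Lyapunov-like condition (with the extra
requirement `v ≤ 1` on the target) yields a `0`-reach-avoid set. -/
theorem stmt_6 {n m : ℕ} (lam : ℝ) (hlam : 1 < lam)
    (f : (Fin n → ℝ) → (Fin m → ℝ) → (Fin n → ℝ))
    (hf : Measurable fun p : (Fin n → ℝ) × (Fin m → ℝ) => f p.1 p.2)
    (U : Set (Fin m → ℝ)) (hUc : IsCompact U) (hUne : U.Nonempty)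
    (X T Xhat : Set (Fin n → ℝ))
    (hXo : IsOpen X) (hXb : Bornology.IsBounded X)
    (hTo : IsOpen T) (hTb : Bornology.IsBounded T) (hTX : T ⊆ X)
    (hXhatm : MeasurableSet Xhat)
    (hXhat1 : ∀ x ∈ X, ∀ u ∈ U, f x u ∈ Xhat) (hXhat2 : X ⊆ Xhat)
    (P : Measure (Fin m → ℝ)) [IsProbabilityMeasure P] (hPU : P U = 1)
    -- `Pinf` is the i.i.d. product measure `P^∞` on the sequence space,
    -- characterized on cylinder sets.
    (Pinf : Measure (ℕ → (Fin m → ℝ))) [IsProbabilityMeasure Pinf]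
    (hPinf : ∀ (k : ℕ) (s : ℕ → Set (Fin m → ℝ)), (∀ i, MeasurableSet (s i)) →
      Pinf {ω | ∀ i < k, ω i ∈ s i} = ∏ i ∈ Finset.range k, P (s i))
    (v : (Fin n → ℝ) → ℝ) (hvm : Measurable v)
    (hvb : ∃ M : ℝ, ∀ x ∈ Xhat, |v x| ≤ M)
    (h1 : ∀ x ∈ X \ T, lam * v x ≤ ∫ u, v (f x u) ∂P)
    (h2 : ∀ x ∈ Xhat \ X, v x ≤ 0)
    (h3 : ∀ x ∈ T, v x ≤ 1) :
    ∀ x0 ∈ X, 0 < v x0 →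
      0 < Pinf {π : ℕ → (Fin m → ℝ) |
        ∃ k : ℕ, traj f x0 π k ∈ T ∧ ∀ l ≤ k, traj f x0 π l ∈ X} := by
  intro x0 hx0 hv0
  classical
  set E := {π : ℕ → (Fin m → ℝ) |
      ∃ k : ℕ, traj f x0 π k ∈ T ∧ ∀ l ≤ k, traj f x0 π l ∈ X} with hEdef
  by_cases hx0T : x0 ∈ T
  · have hEu : E = Set.univ := by
      apply Set.eq_univ_of_forall
      intro π
      exact ⟨0, hx0T, fun l hl => by simpa [Nat.le_zero.mp hl, traj] using hx0⟩
    rw [hEu, measure_univ]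
    exact zero_lt_one
  by_contra hcon
  have hE0 : Pinf E = 0 := by
    rw [not_lt] at hcon
    exact le_antisymm hcon zero_le
  obtain ⟨M, hM⟩ := hvb
  have hM0 : 0 ≤ M := le_trans (abs_nonneg _) (hM x0 (hXhat2 hx0))
  have hXm : MeasurableSet X := hXo.measurableSet
  have hTm : MeasurableSet T := hTo.measurableSet
  have hXTm : MeasurableSet (X \ T) := hXm.diff hTm
  have hUm : MeasurableSet U := hUc.measurableSet
  have hlam0 : (0:ℝ) < lam := lt_trans one_pos hlam
  -- the pushforward of `Pinf` along restriction is the finite product measure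
  have hmap : ∀ k : ℕ, Pinf.map (res0 k) = Measure.pi (fun _ : Fin k => P) := by
    intro k
    refine (Measure.pi_eq (μ := fun _ : Fin k => P) fun s hs => ?_).symm
    rw [Measure.map_apply measurable_res0 (MeasurableSet.univ_pi hs)]
    set s' : ℕ → Set (Fin m → ℝ) := fun i => if h : i < k then s ⟨i, h⟩ else Set.univ with hs'
    have hpre : res0 k ⁻¹' Set.univ.pi s = {ω : ℕ → (Fin m → ℝ) | ∀ i < k, ω i ∈ s' i} := by
      ext π
      simp only [Set.mem_preimage, Set.mem_univ_pi, Set.mem_setOf_eq, res0]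
      constructor
      · intro h i hi
        simpa [hs', dif_pos hi] using h ⟨i, hi⟩
      · intro h i
        have := h i.val i.isLt
        simpa [hs', dif_pos i.isLt] using this
    rw [hpre, hPinf k s' (fun i => by
      by_cases h : i < k <;> simp [hs', h, (hs _), MeasurableSet.univ])]
    have hcongr : ∀ i : Fin k, P (s i) = (fun j => P (s' j)) i.val := by
      intro i; simp [hs', dif_pos i.isLt]
    rw [Finset.prod_congr rfl fun i _ => hcongr i]
    exact (Fin.prod_univ_eq_prod_range (fun j => P (s' j)) k).symm
  -- the "still alive" sets at the finite level
  set B : ∀ k : ℕ, Set (Fin k → (Fin m → ℝ)) :=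
    fun k => {u | ∀ l ≤ k, traj f x0 (ext0 k u) l ∈ X \ T} with hBdef
  have htrajm : ∀ t, Measurable fun π : ℕ → (Fin m → ℝ) => traj f x0 π t :=
    measurable_traj hf x0
  have hFml : ∀ k l : ℕ, Measurable fun u : Fin k → (Fin m → ℝ) => traj f x0 (ext0 k u) l :=
    fun k l => (htrajm l).comp measurable_ext0
  have hBm : ∀ k, MeasurableSet (B k) := by
    intro k
    have hBi : B k = ⋂ (l : ℕ), ⋂ (_ : l ≤ k),
        (fun u : Fin k → (Fin m → ℝ) => traj f x0 (ext0 k u) l) ⁻¹' (X \ T) := by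
      ext u; simp [hBdef, Set.mem_iInter]
    rw [hBi]
    exact MeasurableSet.iInter fun l => MeasurableSet.iInter fun _ => (hFml k l) hXTm
  have hext_res : ∀ (k : ℕ) (π : ℕ → (Fin m → ℝ)), ∀ l ≤ k,
      traj f x0 (ext0 k (res0 k π)) l = traj f x0 π l := by
    intro k π l hl
    apply traj_congr
    intro i hi
    have hik : i < k := lt_of_lt_of_le hi hl
    simp [ext0, res0, dif_pos hik]
  have hBpre : ∀ k, res0 k ⁻¹' (B k) = {π | ∀ l ≤ k, traj f x0 π l ∈ X \ T} := by
    intro k; ext π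
    simp only [Set.mem_preimage, hBdef, Set.mem_setOf_eq]
    constructor
    · intro h l hl; rw [← hext_res k π l hl]; exact h l hl
    · intro h l hl; rw [hext_res k π l hl]; exact h l hl
  -- behaviour of trajectories of extended tuples under `Fin.init`/`Fin.last`
  have hinit : ∀ (k : ℕ) (w : Fin (k+1) → (Fin m → ℝ)), ∀ l ≤ k,
      traj f x0 (ext0 (k+1) w) l = traj f x0 (ext0 k (Fin.init w)) l := by
    intro k w l hl
    apply traj_congr
    intro i hi
    have hik : i < k := lt_of_lt_of_le hi hl
    have h1' : i < k + 1 := Nat.lt_succ_of_lt hik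
    simp only [ext0, dif_pos hik, dif_pos h1']
    show w ⟨i, h1'⟩ = w (Fin.castSucc ⟨i, hik⟩)
    rfl
  have hsucc : ∀ (k : ℕ) (w : Fin (k+1) → (Fin m → ℝ)),
      traj f x0 (ext0 (k+1) w) (k+1)
        = f (traj f x0 (ext0 k (Fin.init w)) k) (w (Fin.last k)) := by
    intro k w
    have h1' : traj f x0 (ext0 (k+1) w) (k+1)
        = f (traj f x0 (ext0 (k+1) w) k) (ext0 (k+1) w k) := rfl
    rw [h1', hinit k w k le_rfl]
    congr 1
    simp only [ext0, dif_pos (Nat.lt_succ_self k)]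
    rfl
  have hBsucc : ∀ (k : ℕ) (w : Fin (k+1) → (Fin m → ℝ)),
      w ∈ B (k+1) ↔ Fin.init w ∈ B k ∧
        f (traj f x0 (ext0 k (Fin.init w)) k) (w (Fin.last k)) ∈ X \ T := by
    intro k w
    simp only [hBdef, Set.mem_setOf_eq]
    constructor
    · intro h
      refine ⟨fun l hl => by rw [← hinit k w l hl]; exact h l (Nat.le_succ_of_le hl), ?_⟩
      rw [← hsucc k w]; exact h (k+1) le_rfl
    · rintro ⟨hb, hs⟩ l hl
      by_cases hlk : l ≤ k
      · rw [hinit k w l hlk]; exact hb l hlk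
      · have hlk' : l = k + 1 := le_antisymm hl (Nat.succ_le_of_lt (Nat.lt_of_not_le hlk))
        subst hlk'
        rw [hsucc k w]; exact hs
  -- the "hit the target at step k+1" sets and their measure
  set C : ∀ k : ℕ, Set (Fin (k+1) → (Fin m → ℝ)) :=
    fun k => {w | Fin.init w ∈ B k ∧
      f (traj f x0 (ext0 k (Fin.init w)) k) (w (Fin.last k)) ∈ T} with hCdef
  have hinitm : ∀ k : ℕ, Measurable (Fin.init : (Fin (k+1) → (Fin m → ℝ)) → _) :=
    fun k => measurable_pi_lambda _ fun _ => measurable_pi_apply _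
  have hCm : ∀ k, MeasurableSet (C k) := by
    intro k
    have : C k = (Fin.init ⁻¹' B k) ∩
        ((fun w : Fin (k+1) → (Fin m → ℝ) =>
          f (traj f x0 (ext0 k (Fin.init w)) k) (w (Fin.last k))) ⁻¹' T) := rfl
    rw [this]
    exact ((hinitm k) (hBm k)).inter
      ((hf.comp (((hFml k k).comp (hinitm k)).prodMk (measurable_pi_apply _))) hTm)
  have hC0 : ∀ k, Measure.pi (fun _ : Fin (k+1) => P) (C k) = 0 := by
    intro k
    rw [← hmap (k+1), Measure.map_apply measurable_res0 (hCm k)]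
    refine le_antisymm ?_ zero_le
    rw [← hE0]
    apply measure_mono
    intro π hπ
    obtain ⟨hb, ht⟩ := hπ
    have hres : Fin.init (res0 (k+1) π) = res0 k π := rfl
    rw [hres] at hb ht
    have hb' : ∀ l ≤ k, traj f x0 π l ∈ X \ T := by
      have := (hBpre k) ▸ Set.mem_preimage.mpr hb
      simpa using this
    have hlastval : res0 (k+1) π (Fin.last k) = π k := rfl
    rw [hext_res k π k le_rfl, hlastval] at ht
    have htT : traj f x0 π (k+1) ∈ T := ht
    refine ⟨k+1, htT, ?_⟩
    intro l hl
    by_cases hlk : l ≤ k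
    · exact (hb' l hlk).1
    · have : l = k + 1 := le_antisymm hl (Nat.succ_le_of_lt (Nat.lt_of_not_le hlk))
      subst this
      exact hTX htT
  -- the value sequence
  set J : ℕ → ℝ := fun k => ∫ u, ((B k).indicator
      fun u => v (traj f x0 (ext0 k u) k)) u ∂(Measure.pi (fun _ : Fin k => P)) with hJdef
  have hx0XT : x0 ∈ X \ T := ⟨hx0, hx0T⟩
  have hBk_state : ∀ (k : ℕ) (u : Fin k → (Fin m → ℝ)), u ∈ B k →
      traj f x0 (ext0 k u) k ∈ X \ T := by
    intro k u hu
    exact hu k le_rfl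
  have hgkm : ∀ k, Measurable ((B k).indicator
      fun u => v (traj f x0 (ext0 k u) k)) :=
    fun k => (hvm.comp (hFml k k)).indicator (hBm k)
  have hgkb : ∀ (k : ℕ) (u : Fin k → (Fin m → ℝ)),
      |((B k).indicator fun u => v (traj f x0 (ext0 k u) k)) u| ≤ M := by
    intro k u
    by_cases hu : u ∈ B k
    · rw [Set.indicator_of_mem hu]
      exact hM _ (hXhat2 (hBk_state k u hu).1)
    · rw [Set.indicator_of_notMem hu]
      simpa using hM0
  have hgki : ∀ k, Integrable ((B k).indicator
      fun u => v (traj f x0 (ext0 k u) k)) (Measure.pi (fun _ : Fin k => P)) :=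
    fun k => Integrable.mono' (integrable_const M) (hgkm k).aestronglyMeasurable
      (Filter.Eventually.of_forall fun u => by
        simpa [Real.norm_eq_abs] using hgkb k u)
  have hJle : ∀ k, J k ≤ M := by
    intro k
    rw [hJdef]
    calc ∫ u, ((B k).indicator fun u => v (traj f x0 (ext0 k u) k)) u
          ∂(Measure.pi (fun _ : Fin k => P))
        ≤ ∫ _, M ∂(Measure.pi (fun _ : Fin k => P)) := by
          apply integral_mono (hgki k) (integrable_const M)
          intro u
          exact le_trans (le_abs_self _) (hgkb k u)
      _ = M := by simp
  have hJ0 : J 0 = v x0 := by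
    have hB0 : B 0 = Set.univ := by
      apply Set.eq_univ_of_forall
      intro u
      intro l hl
      have : l = 0 := Nat.le_zero.mp hl
      subst this
      exact hx0XT
    rw [hJdef]
    simp only [hB0, Set.indicator_univ]
    have : (fun u : Fin 0 → (Fin m → ℝ) => v (traj f x0 (ext0 0 u) 0)) = fun _ => v x0 := rfl
    rw [this, integral_const]
    simp
  -- the key one-step inequality
  have hstep : ∀ k, lam * J k ≤ J (k+1) := by
    intro k
    set ν : Measure (Fin k → (Fin m → ℝ)) := Measure.pi (fun _ : Fin k => P) with hνdef
    set F : (Fin k → (Fin m → ℝ)) → (Fin n → ℝ) :=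
      fun u => traj f x0 (ext0 k u) k with hFdef
    have hFm : Measurable F := hFml k k
    have hFuB : ∀ u ∈ B k, F u ∈ X \ T := fun u hu => hBk_state k u hu
    set e := MeasurableEquiv.piFinSuccAbove (fun _ : Fin (k+1) => (Fin m → ℝ)) (Fin.last k)
      with hedef
    have hmp : MeasurePreserving e (Measure.pi fun _ : Fin (k+1) => P) (P.prod ν) :=
      measurePreserving_piFinSuccAbove (fun _ => P) (Fin.last k)
    have hmps : MeasurePreserving e.symm (P.prod ν) (Measure.pi fun _ : Fin (k+1) => P) :=
      hmp.symm e
    have hesymm : ∀ (a : Fin m → ℝ) (u : Fin k → (Fin m → ℝ)),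
        e.symm (a, u) = Fin.snoc u a := by
      intro a u
      simp [hedef, MeasurableEquiv.piFinSuccAbove, Fin.insertNthEquiv, Fin.insertNth_last']
    have heapp : ∀ w : Fin (k+1) → (Fin m → ℝ), e w = (w (Fin.last k), Fin.init w) := by
      intro w
      simp [hedef, MeasurableEquiv.piFinSuccAbove, Fin.insertNthEquiv, Fin.init]
    -- the integrand on the product space
    set Sp : Set ((Fin m → ℝ) × (Fin k → (Fin m → ℝ))) := Prod.snd ⁻¹' (B k) with hSpdef
    have hSpm : MeasurableSet Sp := measurable_snd (hBm k)
    set G : (Fin m → ℝ) × (Fin k → (Fin m → ℝ)) → ℝ :=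
      Sp.indicator (fun p => v (f (F p.2) p.1)) with hGdef
    have hGm : Measurable G :=
      (hvm.comp (hf.comp ((hFm.comp measurable_snd).prodMk measurable_fst))).indicator hSpm
    have hUae : ∀ᵐ p ∂(P.prod ν), p.1 ∈ U := by
      rw [ae_iff]
      have hset : {p : (Fin m → ℝ) × (Fin k → (Fin m → ℝ)) | ¬ p.1 ∈ U}
          = Uᶜ ×ˢ Set.univ := by
        ext p; simp
      rw [hset, Measure.prod_prod, measure_univ, mul_one]
      exact (prob_compl_eq_zero_iff hUm).mpr hPU
    have hGb : ∀ᵐ p ∂(P.prod ν), ‖G p‖ ≤ M := by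
      refine hUae.mono fun p hp => ?_
      by_cases h : p.2 ∈ B k
      · have : G p = v (f (F p.2) p.1) := Set.indicator_of_mem (show p ∈ Sp from h) _
        rw [this, Real.norm_eq_abs]
        exact hM _ (hXhat1 _ (hFuB p.2 h).1 _ hp)
      · have : G p = 0 := Set.indicator_of_notMem (show p ∉ Sp from h) _
        rw [this]; simpa using hM0
    have hGi : Integrable G (P.prod ν) :=
      Integrable.mono' (integrable_const M) hGm.aestronglyMeasurable hGb
    -- the integrand of `J (k+1)`
    set g1 : (Fin (k+1) → (Fin m → ℝ)) → ℝ := (B (k+1)).indicator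
      (fun w => v (traj f x0 (ext0 (k+1) w) (k+1))) with hg1def
    have hg1m : Measurable g1 := hgkm (k+1)
    have hg1comp : Integrable (fun p => g1 (e.symm p)) (P.prod ν) :=
      Integrable.mono' (integrable_const M)
        ((hg1m.comp e.symm.measurable).aestronglyMeasurable)
        (Filter.Eventually.of_forall fun p => by
          simpa [Real.norm_eq_abs] using hgkb (k+1) (e.symm p))
    -- the target-hitting indicator
    set Sp' : Set ((Fin m → ℝ) × (Fin k → (Fin m → ℝ))) :=
      Sp ∩ ((fun p => f (F p.2) p.1) ⁻¹' T) with hSp'def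
    have hSp'm : MeasurableSet Sp' :=
      hSpm.inter ((hf.comp ((hFm.comp measurable_snd).prodMk measurable_fst)) hTm)
    have hI2i : Integrable (Sp'.indicator fun _ => (1:ℝ)) (P.prod ν) :=
      (integrable_const (1:ℝ)).indicator hSp'm
    -- snoc-membership facts
    have hsnocB : ∀ (a : Fin m → ℝ) (u : Fin k → (Fin m → ℝ)),
        (Fin.snoc u a ∈ B (k+1)) ↔ (u ∈ B k ∧ f (F u) a ∈ X \ T) := by
      intro a u
      rw [hBsucc k (Fin.snoc u a)]
      rw [Fin.init_snoc, Fin.snoc_last]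
    have htrsnoc : ∀ (a : Fin m → ℝ) (u : Fin k → (Fin m → ℝ)),
        traj f x0 (ext0 (k+1) (Fin.snoc u a)) (k+1) = f (F u) a := by
      intro a u
      rw [hsucc k (Fin.snoc u a), Fin.init_snoc, Fin.snoc_last]
    -- pointwise a.e. comparison
    have hptwise : ∀ᵐ p ∂(P.prod ν),
        G p ≤ g1 (e.symm p) + Sp'.indicator (fun _ => (1:ℝ)) p := by
      refine hUae.mono fun p hp => ?_
      obtain ⟨a, u⟩ := p
      rw [hesymm a u]
      by_cases hu : u ∈ B k
      · have hFu := hFuB u hu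
        have hGp : G (a, u) = v (f (F u) a) :=
          Set.indicator_of_mem (show (a, u) ∈ Sp from hu) _
        have hfhat : f (F u) a ∈ Xhat := hXhat1 _ hFu.1 _ hp
        by_cases hT' : f (F u) a ∈ T
        · have h0 : g1 (Fin.snoc u a) = 0 := Set.indicator_of_notMem
            (by rw [hsnocB]; rintro ⟨-, h⟩; exact h.2 hT') _
          have hI2v : Sp'.indicator (fun _ => (1:ℝ)) (a, u) = 1 :=
            Set.indicator_of_mem (show (a, u) ∈ Sp' from ⟨hu, hT'⟩) _
          rw [hGp, h0, hI2v, zero_add]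
          exact h3 _ hT'
        · by_cases hX' : f (F u) a ∈ X
          · have hmem : Fin.snoc u a ∈ B (k+1) := (hsnocB a u).mpr ⟨hu, hX', hT'⟩
            have h0 : Sp'.indicator (fun _ => (1:ℝ)) (a, u) = 0 :=
              Set.indicator_of_notMem (show (a, u) ∉ Sp' from fun h => hT' h.2) _
            rw [hGp, h0, add_zero]
            rw [hg1def]
            rw [Set.indicator_of_mem hmem, htrsnoc a u]
          · have h0 : g1 (Fin.snoc u a) = 0 := Set.indicator_of_notMem
              (by rw [hsnocB]; rintro ⟨-, h⟩; exact hX' h.1) _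
            have h0' : Sp'.indicator (fun _ => (1:ℝ)) (a, u) = 0 :=
              Set.indicator_of_notMem (show (a, u) ∉ Sp' from fun h => hT' h.2) _
            rw [hGp, h0, h0', add_zero]
            exact h2 _ ⟨hfhat, hX'⟩
      · have hGp : G (a, u) = 0 := Set.indicator_of_notMem (show (a, u) ∉ Sp from hu) _
        have h0 : g1 (Fin.snoc u a) = 0 := Set.indicator_of_notMem
          (by rw [hsnocB]; rintro ⟨h, -⟩; exact hu h) _
        have h0' : Sp'.indicator (fun _ => (1:ℝ)) (a, u) = 0 :=
          Set.indicator_of_notMem (show (a, u) ∉ Sp' from fun h => hu h.1) _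
        rw [hGp, h0, h0', add_zero]
    -- the measure of `Sp'` vanishes
    have hSp'0 : (P.prod ν) Sp' = 0 := by
      rw [← hmp.measure_preimage hSp'm.nullMeasurableSet]
      have hpre : e ⁻¹' Sp' = C k := by
        ext w
        rw [Set.mem_preimage, heapp w]
        constructor
        · rintro ⟨hb, ht⟩; exact ⟨hb, ht⟩
        · rintro ⟨hb, ht⟩; exact ⟨hb, ht⟩
      rw [hpre]
      exact hC0 k
    -- Fubini lower bound
    have hIntSwap : ∫ p, G p ∂(P.prod ν) = ∫ u, ∫ a, G (a, u) ∂P ∂ν :=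
      integral_prod_symm G hGi
    have hinner_eq : ∀ u ∈ B k, ∫ a, G (a, u) ∂P = ∫ a, v (f (F u) a) ∂P := by
      intro u hu
      have : (fun a => G (a, u)) = fun a => v (f (F u) a) :=
        funext fun a => Set.indicator_of_mem (show (a, u) ∈ Sp from hu) _
      rw [this]
    have hinner0 : ∀ u ∉ B k, ∫ a, G (a, u) ∂P = 0 := by
      intro u hu
      have : (fun a => G (a, u)) = fun _ => (0:ℝ) :=
        funext fun a => Set.indicator_of_notMem (show (a, u) ∉ Sp from hu) _
      rw [this, integral_const]
      simp
    have hlow : ∀ u, ((B k).indicator fun u => lam * v (F u)) u ≤ ∫ a, G (a, u) ∂P := by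
      intro u
      by_cases hu : u ∈ B k
      · rw [Set.indicator_of_mem hu, hinner_eq u hu]
        exact h1 (F u) (hFuB u hu)
      · rw [Set.indicator_of_notMem hu, hinner0 u hu]
    have hlowm : Measurable ((B k).indicator fun u => lam * v (F u)) :=
      ((hvm.comp hFm).const_mul lam).indicator (hBm k)
    have hlowb : ∀ u, |((B k).indicator fun u => lam * v (F u)) u| ≤ |lam| * M := by
      intro u
      by_cases hu : u ∈ B k
      · rw [Set.indicator_of_mem hu, abs_mul]
        exact mul_le_mul_of_nonneg_left (hM _ (hXhat2 (hFuB u hu).1)) (abs_nonneg lam)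
      · rw [Set.indicator_of_notMem hu]
        simpa using mul_nonneg (abs_nonneg lam) hM0
    have hlowi : Integrable ((B k).indicator fun u => lam * v (F u)) ν :=
      Integrable.mono' (integrable_const (|lam| * M)) hlowm.aestronglyMeasurable
        (Filter.Eventually.of_forall fun u => by
          simpa [Real.norm_eq_abs] using hlowb u)
    have hmono1 : ∫ u, ((B k).indicator fun u => lam * v (F u)) u ∂ν
        ≤ ∫ u, ∫ a, G (a, u) ∂P ∂ν :=
      integral_mono hlowi hGi.integral_prod_right hlow
    have hlamJ : lam * J k = ∫ u, ((B k).indicator fun u => lam * v (F u)) u ∂ν := by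
      rw [hJdef]
      rw [← integral_const_mul]
      congr 1
      funext u
      by_cases hu : u ∈ B k
      · rw [Set.indicator_of_mem hu, Set.indicator_of_mem hu]
      · rw [Set.indicator_of_notMem hu, Set.indicator_of_notMem hu, mul_zero]
    have hupper : ∫ p, G p ∂(P.prod ν) ≤ J (k+1) := by
      have hmono2 : ∫ p, G p ∂(P.prod ν) ≤ (∫ p, g1 (e.symm p) ∂(P.prod ν))
          + ∫ p, Sp'.indicator (fun _ => (1:ℝ)) p ∂(P.prod ν) :=
        le_trans (integral_mono_ae hGi (hg1comp.add hI2i) hptwise)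
          (le_of_eq (integral_add hg1comp hI2i))
      have hcomp : ∫ p, g1 (e.symm p) ∂(P.prod ν)
          = ∫ w, g1 w ∂(Measure.pi fun _ : Fin (k+1) => P) :=
        hmps.integral_comp' g1
      have hI2z : ∫ p, Sp'.indicator (fun _ => (1:ℝ)) p ∂(P.prod ν) = 0 := by
        rw [integral_indicator_const (1:ℝ) hSp'm, measureReal_def, hSp'0]
        simp
      rw [hcomp, hI2z, add_zero] at hmono2
      exact hmono2
    calc lam * J k = ∫ u, ((B k).indicator fun u => lam * v (F u)) u ∂ν := hlamJ
      _ ≤ ∫ u, ∫ a, G (a, u) ∂P ∂ν := hmono1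
      _ = ∫ p, G p ∂(P.prod ν) := hIntSwap.symm
      _ ≤ J (k+1) := hupper
  -- conclusion
  have hpow : ∀ k, lam ^ k * v x0 ≤ J k := by
    intro k
    induction k with
    | zero => simp [hJ0]
    | succ k ih =>
        calc lam ^ (k+1) * v x0 = lam * (lam ^ k * v x0) := by ring
          _ ≤ lam * J k := mul_le_mul_of_nonneg_left ih (le_of_lt hlam0)
          _ ≤ J (k+1) := hstep k
  obtain ⟨k, hk⟩ := pow_unbounded_of_one_lt (M / v x0) hlam
  have hMk : M < lam ^ k * v x0 := (div_lt_iff₀ hv0).mp hk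
  linarith [hpow k, hJle k]
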